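/- Let σ : [0,1] → ℝ be measurable with 0 < s1 ≤ σ(u) ≤ s2 for all u ∈ [0,1], let T(t) = ∫_0^t σ²(u) du, ρ = T(1), τ = T(t), let c1 < c2, and let I(x,t) = (Φ'(z1) - Φ'(z2))² / ( √(ρ-τ) · (Φ(z2) - Φ(z1)) · (Φ(-z2) + Φ(z1)) ) with z1 = (c1 - x)/√(ρ-τ), z2 = (c2 - x)/√(ρ-τ). Define for t ∈ (0,1) the function G(t) = σ²(t) / ( 2π √(ρ-τ) √(2πτ) ) · ∫_{-∞}^{∞} I(x,t) e^{-x²/2} dx. Then ∫_0^1 G(t) dt < ∞. -/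

import Mathlib

set_option maxHeartbeats 1000000


open MeasureTheory Real Set Filter

/-- The standard normal density `Φ'(z) = (1/√(2π)) e^{-z²/2}`. -/
noncomputable def Φ' (z : ℝ) : ℝ := (Real.sqrt (2 * Real.pi))⁻¹ * Real.exp (-z ^ 2 / 2)

/-- The standard normal cumulative distribution function `Φ`. -/
noncomputable def Φ (z : ℝ) : ℝ := ∫ u in Set.Iic z, Φ' u


lemma sqrt_two_pi_pos : 0 < Real.sqrt (2 * Real.pi) :=
  Real.sqrt_pos.2 (by positivity)

lemma Φ'_pos (z : ℝ) : 0 < Φ' z := by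
  unfold Φ'; positivity

lemma Φ'_even (z : ℝ) : Φ' (-z) = Φ' z := by unfold Φ'; rw [neg_sq]

lemma Φ'_anti {a b : ℝ} (h : |a| ≤ |b|) : Φ' b ≤ Φ' a := by
  unfold Φ'
  have h2 : b ^ 2 ≥ a ^ 2 := by
    rw [← sq_abs a, ← sq_abs b]
    exact pow_le_pow_left₀ (abs_nonneg a) h 2
  have := Real.exp_le_exp.2 (by linarith : -b ^ 2 / 2 ≤ -a ^ 2 / 2)
  exact mul_le_mul_of_nonneg_left this (inv_nonneg.2 sqrt_two_pi_pos.le)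

lemma integrable_Φ' : Integrable Φ' := by
  have : Integrable (fun z : ℝ => Real.exp (-(1/2 : ℝ) * z ^ 2)) := integrable_exp_neg_mul_sq (by norm_num)
  have h := this.const_mul (Real.sqrt (2 * Real.pi))⁻¹
  refine h.congr (Eventually.of_forall fun z => ?_)
  unfold Φ'; ring_nf

lemma Φ_mono {a b : ℝ} (h : a ≤ b) : Φ a ≤ Φ b := by
  unfold Φ
  exact setIntegral_mono_set integrable_Φ'.integrableOn
    (Eventually.of_forall fun z => (Φ'_pos z).le)
    (HasSubset.Subset.eventuallyLE (Iic_subset_Iic.2 h))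

lemma Φ_sub_eq {a b : ℝ} (h : a ≤ b) : Φ b - Φ a = ∫ u in Set.Ioc a b, Φ' u := by
  unfold Φ
  rw [intervalIntegral.integral_Iic_sub_Iic integrable_Φ'.integrableOn integrable_Φ'.integrableOn,
    intervalIntegral.integral_of_le h]

lemma Φ_gap {a b c : ℝ} (hab : a ≤ b) (hc0 : 0 ≤ c) (hc : ∀ u ∈ Set.Ioc a b, c ≤ Φ' u) :
    (b - a) * c ≤ Φ b - Φ a := by
  rw [Φ_sub_eq hab]
  have := setIntegral_ge_of_const_le_real (c := c) measurableSet_Ioc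
    (by simp : volume (Set.Ioc a b) ≠ ⊤) hc (integrable_Φ'.integrableOn)
  rw [Real.volume_real_Ioc_of_le hab] at this
  linarith

lemma Φ_nonneg (z : ℝ) : 0 ≤ Φ z :=
  setIntegral_nonneg measurableSet_Iic fun u _ => (Φ'_pos u).le

lemma Φ_lb (z : ℝ) : Φ' (|z| + 1) ≤ Φ z := by
  have hgap : (z - (z - 1)) * Φ' (|z| + 1) ≤ Φ z - Φ (z - 1) := by
    refine Φ_gap (by linarith) (Φ'_pos _).le fun u hu => ?_
    refine Φ'_anti ?_
    rw [abs_of_nonneg (by positivity : (0:ℝ) ≤ |z| + 1)]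
    have h1 := hu.1; have h2 := hu.2
    have := neg_abs_le z; have := le_abs_self z
    exact abs_le.2 ⟨by linarith, by linarith⟩
  have h0 := Φ_nonneg (z - 1)
  have : (z - (z - 1)) * Φ' (|z| + 1) = Φ' (|z| + 1) := by ring_nf
  linarith [this ▸ hgap]

lemma Φ_pos (z : ℝ) : 0 < Φ z := lt_of_lt_of_le (Φ'_pos _) (Φ_lb z)

lemma ratio1 (δ z : ℝ) :
    Φ' z ^ 2 / Φ' (z + δ) ≤ (Real.sqrt (2*Real.pi))⁻¹ * Real.exp (3*δ^2/2) * Real.exp (-z^2/4) := by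
  rw [div_le_iff₀ (Φ'_pos _)]
  have key : Real.exp (-z^2/2) ^ 2 ≤
      Real.exp (3*δ^2/2) * (Real.exp (-z^2/4) * Real.exp (-(z+δ)^2/2)) := by
    rw [pow_two, ← Real.exp_add, ← Real.exp_add, ← Real.exp_add]
    exact Real.exp_le_exp.2 (by nlinarith [sq_nonneg (δ - z/2)])
  calc Φ' z ^ 2 = ((Real.sqrt (2*Real.pi))⁻¹)^2 * Real.exp (-z^2/2)^2 := by unfold Φ'; ring
    _ ≤ ((Real.sqrt (2*Real.pi))⁻¹)^2 *
        (Real.exp (3*δ^2/2) * (Real.exp (-z^2/4) * Real.exp (-(z+δ)^2/2))) :=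
      mul_le_mul_of_nonneg_left key (by positivity)
    _ = (Real.sqrt (2*Real.pi))⁻¹ * Real.exp (3*δ^2/2) * Real.exp (-z^2/4) * Φ' (z + δ) := by
      unfold Φ'; ring

lemma ratio2 {z : ℝ} (hz : z ≤ 0) :
    Φ' z ^ 2 / Φ z ≤ (Real.sqrt (2*Real.pi))⁻¹ * Real.exp (3/2 : ℝ) * Real.exp (-z^2/4) := by
  have h0 : Φ' (1 - z) ≤ Φ z := by
    have := Φ_lb z
    rwa [abs_of_nonpos hz, show -z + 1 = 1 - z by ring] at this
  have step1 : Φ' z ^ 2 / Φ z ≤ Φ' z ^ 2 / Φ' (1 - z) := by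
    exact div_le_div_of_nonneg_left (sq_nonneg _) (Φ'_pos _) h0
  refine step1.trans ?_
  rw [div_le_iff₀ (Φ'_pos _)]
  have key : Real.exp (-z^2/2) ^ 2 ≤
      Real.exp (3/2 : ℝ) * (Real.exp (-z^2/4) * Real.exp (-(1-z)^2/2)) := by
    rw [pow_two, ← Real.exp_add, ← Real.exp_add, ← Real.exp_add]
    exact Real.exp_le_exp.2 (by nlinarith [sq_nonneg (z/2 + 1)])
  calc Φ' z ^ 2 = ((Real.sqrt (2*Real.pi))⁻¹)^2 * Real.exp (-z^2/2)^2 := by unfold Φ'; ring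
    _ ≤ ((Real.sqrt (2*Real.pi))⁻¹)^2 *
        (Real.exp (3/2 : ℝ) * (Real.exp (-z^2/4) * Real.exp (-(1-z)^2/2))) :=
      mul_le_mul_of_nonneg_left key (by positivity)
    _ = (Real.sqrt (2*Real.pi))⁻¹ * Real.exp (3/2 : ℝ) * Real.exp (-z^2/4) * Φ' (1 - z) := by
      unfold Φ'; ring

noncomputable def Abound (δ : ℝ) : ℝ :=
  (Real.sqrt (2*Real.pi))⁻¹ * Real.exp (3*δ^2/2) / (δ * Φ 0) +
    (Real.sqrt (2*Real.pi))⁻¹ * Real.exp (3/2 : ℝ) / (δ/2 * Φ' (δ/2))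

lemma Abound_nonneg {δ : ℝ} (hδ : 0 < δ) : 0 ≤ Abound δ := by
  unfold Abound
  have h1 := Φ_pos 0
  have h2 := Φ'_pos (δ/2)
  positivity

lemma core {δ z1 z2 : ℝ} (hδ : 0 < δ) (h : z1 + δ ≤ z2) :
    (Φ' z1 - Φ' z2) ^ 2 / ((Φ z2 - Φ z1) * (Φ (-z2) + Φ z1)) ≤
      Abound δ * (Real.exp (-z1^2/4) + Real.exp (-z2^2/4)) := by
  set A1 : ℝ := (Real.sqrt (2*Real.pi))⁻¹ * Real.exp (3*δ^2/2) / (δ * Φ 0) with hA1def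
  set A2 : ℝ := (Real.sqrt (2*Real.pi))⁻¹ * Real.exp (3/2 : ℝ) / (δ/2 * Φ' (δ/2)) with hA2def
  have hA1 : 0 ≤ A1 := by
    have := Φ_pos 0; rw [hA1def]; positivity
  have hA2 : 0 ≤ A2 := by
    have := Φ'_pos (δ/2); rw [hA2def]; positivity
  have hAsum : Abound δ = A1 + A2 := rfl
  have he1 : 0 < Real.exp (-z1^2/4) := Real.exp_pos _
  have he2 : 0 < Real.exp (-z2^2/4) := Real.exp_pos _
  rw [hAsum]
  rcases le_or_gt 0 z1 with hz1 | hz1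
  · -- Case A : 0 ≤ z1
    have hnum : (Φ' z1 - Φ' z2) ^ 2 ≤ Φ' z1 ^ 2 := by
      have hle : Φ' z2 ≤ Φ' z1 := Φ'_anti (by
        rw [abs_of_nonneg hz1, abs_of_nonneg (by linarith : (0:ℝ) ≤ z2)]; linarith)
      nlinarith [Φ'_pos z2, Φ'_pos z1]
    have hgap : δ * Φ' (z1 + δ) ≤ Φ z2 - Φ z1 := by
      have g1 : (z1 + δ - z1) * Φ' (z1 + δ) ≤ Φ (z1 + δ) - Φ z1 := by
        refine Φ_gap (by linarith) (Φ'_pos _).le fun u hu => ?_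
        refine Φ'_anti ?_
        rw [abs_of_pos (show 0 < u by linarith [hu.1]), abs_of_pos (by linarith)]
        exact hu.2
      have g2 : Φ (z1 + δ) ≤ Φ z2 := Φ_mono (by linarith)
      have he : (z1 + δ - z1) = δ := by ring
      rw [he] at g1; linarith
    have hthird : Φ 0 ≤ Φ (-z2) + Φ z1 := by
      have := Φ_nonneg (-z2); have := Φ_mono hz1; linarith
    have hD' : 0 < δ * Φ' (z1 + δ) * Φ 0 := by
      have := Φ'_pos (z1 + δ); have := Φ_pos 0; positivity
    have hfrac : (Φ' z1 - Φ' z2) ^ 2 / ((Φ z2 - Φ z1) * (Φ (-z2) + Φ z1)) ≤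
        Φ' z1 ^ 2 / (δ * Φ' (z1 + δ) * Φ 0) := by
      refine div_le_div₀ (sq_nonneg _) hnum hD' ?_
      exact mul_le_mul hgap hthird (Φ_pos 0).le
        (le_trans (by have := Φ'_pos (z1 + δ); positivity) hgap)
    have heq : Φ' z1 ^ 2 / (δ * Φ' (z1 + δ) * Φ 0) =
        (Φ' z1 ^ 2 / Φ' (z1 + δ)) / (δ * Φ 0) := by
      rw [div_div]; ring_nf
    have hfinal : (Φ' z1 ^ 2 / Φ' (z1 + δ)) / (δ * Φ 0) ≤ A1 * Real.exp (-z1^2/4) := by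
      have hpos : 0 < δ * Φ 0 := by have := Φ_pos 0; positivity
      have := div_le_div₀ (by positivity) (ratio1 δ z1) hpos le_rfl
      refine this.trans (le_of_eq ?_)
      rw [hA1def]; ring
    have := hfrac.trans (heq ▸ hfinal)
    nlinarith [mul_nonneg hA2 he2.le, mul_nonneg hA1 he2.le, mul_nonneg hA2 he1.le]
  · rcases le_or_gt z2 0 with hz2 | hz2
    · -- Case B : z2 ≤ 0
      have hnum : (Φ' z1 - Φ' z2) ^ 2 ≤ Φ' z2 ^ 2 := by
        have hle : Φ' z1 ≤ Φ' z2 := Φ'_anti (by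
          rw [abs_of_nonpos hz2, abs_of_nonpos (by linarith : z1 ≤ 0)]; linarith)
        nlinarith [Φ'_pos z2, Φ'_pos z1]
      have hgap : δ * Φ' (z2 - δ) ≤ Φ z2 - Φ z1 := by
        have g1 : (z2 - (z2 - δ)) * Φ' (z2 - δ) ≤ Φ z2 - Φ (z2 - δ) := by
          refine Φ_gap (by linarith) (Φ'_pos _).le fun u hu => ?_
          refine Φ'_anti ?_
          rw [abs_of_nonpos (show u ≤ 0 by linarith [hu.2]),
            abs_of_neg (by linarith : z2 - δ < 0)]
          linarith [hu.1]
        have g2 : Φ z1 ≤ Φ (z2 - δ) := Φ_mono (by linarith)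
        have he : (z2 - (z2 - δ)) = δ := by ring
        rw [he] at g1; linarith
      have hthird : Φ 0 ≤ Φ (-z2) + Φ z1 := by
        have := Φ_nonneg z1; have := Φ_mono (by linarith : (0:ℝ) ≤ -z2); linarith
      have hD' : 0 < δ * Φ' (z2 - δ) * Φ 0 := by
        have := Φ'_pos (z2 - δ); have := Φ_pos 0; positivity
      have hfrac : (Φ' z1 - Φ' z2) ^ 2 / ((Φ z2 - Φ z1) * (Φ (-z2) + Φ z1)) ≤
          Φ' z2 ^ 2 / (δ * Φ' (z2 - δ) * Φ 0) := by
        refine div_le_div₀ (sq_nonneg _) hnum hD' ?_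
        exact mul_le_mul hgap hthird (Φ_pos 0).le (le_trans (by have := Φ'_pos (z2 - δ); positivity) hgap)
      have hswap : Φ' z2 ^ 2 / Φ' (z2 - δ) = Φ' (-z2) ^ 2 / Φ' (-z2 + δ) := by
        rw [Φ'_even, show -z2 + δ = -(z2 - δ) by ring, Φ'_even]
      have heq : Φ' z2 ^ 2 / (δ * Φ' (z2 - δ) * Φ 0) =
          (Φ' z2 ^ 2 / Φ' (z2 - δ)) / (δ * Φ 0) := by
        rw [div_div]; ring_nf
      have hfinal : (Φ' z2 ^ 2 / Φ' (z2 - δ)) / (δ * Φ 0) ≤ A1 * Real.exp (-z2^2/4) := by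
        have hpos : 0 < δ * Φ 0 := by have := Φ_pos 0; positivity
        have hr := ratio1 δ (-z2)
        rw [neg_sq] at hr
        rw [hswap]
        have := div_le_div₀ (by positivity) hr hpos le_rfl
        refine this.trans (le_of_eq ?_)
        rw [hA1def]; ring
      have := hfrac.trans (heq ▸ hfinal)
      nlinarith [mul_nonneg hA2 he2.le, mul_nonneg hA1 he1.le, mul_nonneg hA2 he1.le]
    · -- Case C : z1 < 0 < z2
      have hcδ : 0 < δ/2 * Φ' (δ/2) := by have := Φ'_pos (δ/2); positivity
      have hgap : δ/2 * Φ' (δ/2) ≤ Φ z2 - Φ z1 := by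
        rcases le_or_gt (δ/2) z2 with hc | hc
        · have g1 : (δ/2 - 0) * Φ' (δ/2) ≤ Φ (δ/2) - Φ 0 := by
            refine Φ_gap (by linarith) (Φ'_pos _).le fun u hu => ?_
            refine Φ'_anti ?_
            rw [abs_of_pos hu.1, abs_of_pos (by linarith : (0:ℝ) < δ/2)]
            exact hu.2
          have g2 : Φ (δ/2) ≤ Φ z2 := Φ_mono hc
          have g3 : Φ z1 ≤ Φ 0 := Φ_mono hz1.le
          have he : (δ/2 - (0:ℝ)) = δ/2 := by ring
          rw [he] at g1; linarith
        · have hz1' : z1 < -(δ/2) := by linarith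
          have g1 : ((0:ℝ) - (-(δ/2))) * Φ' (δ/2) ≤ Φ 0 - Φ (-(δ/2)) := by
            refine Φ_gap (by linarith) (Φ'_pos _).le fun u hu => ?_
            refine Φ'_anti ?_
            rw [abs_of_pos (by linarith : (0:ℝ) < δ/2)]
            rw [abs_le]
            exact ⟨by linarith [hu.1], by linarith [hu.2]⟩
          have g2 : Φ 0 ≤ Φ z2 := Φ_mono hz2.le
          have g3 : Φ z1 ≤ Φ (-(δ/2)) := Φ_mono hz1'.le
          have he : ((0:ℝ) - (-(δ/2))) = δ/2 := by ring
          rw [he] at g1; linarith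
      have hnum : (Φ' z1 - Φ' z2) ^ 2 ≤ Φ' z1 ^ 2 + Φ' z2 ^ 2 := by
        nlinarith [mul_nonneg (Φ'_pos z1).le (Φ'_pos z2).le]
      have hP : 0 < Φ z1 := Φ_pos z1
      have hQ : 0 < Φ (-z2) := Φ_pos (-z2)
      have hfrac : (Φ' z1 - Φ' z2) ^ 2 / ((Φ z2 - Φ z1) * (Φ (-z2) + Φ z1)) ≤
          (Φ' z1 ^ 2 + Φ' z2 ^ 2) / (δ/2 * Φ' (δ/2) * (Φ (-z2) + Φ z1)) := by
        refine div_le_div₀ (by positivity) hnum (by positivity) ?_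
        exact mul_le_mul_of_nonneg_right hgap (by linarith)
      have hsplit : (Φ' z1 ^ 2 + Φ' z2 ^ 2) / (δ/2 * Φ' (δ/2) * (Φ (-z2) + Φ z1)) ≤
          (Φ' z1 ^ 2 / Φ z1 + Φ' z2 ^ 2 / Φ (-z2)) / (δ/2 * Φ' (δ/2)) := by
        rw [mul_comm (δ/2 * Φ' (δ/2)), ← div_div]
        refine div_le_div_of_nonneg_right ?_ hcδ.le
        have i1 : Φ' z1 ^ 2 / (Φ (-z2) + Φ z1) ≤ Φ' z1 ^ 2 / Φ z1 :=
          div_le_div_of_nonneg_left (sq_nonneg _) hP (by linarith)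
        have i2 : Φ' z2 ^ 2 / (Φ (-z2) + Φ z1) ≤ Φ' z2 ^ 2 / Φ (-z2) :=
          div_le_div_of_nonneg_left (sq_nonneg _) hQ (by linarith)
        have hadd : (Φ' z1 ^ 2 + Φ' z2 ^ 2) / (Φ (-z2) + Φ z1) =
            Φ' z1 ^ 2 / (Φ (-z2) + Φ z1) + Φ' z2 ^ 2 / (Φ (-z2) + Φ z1) :=
          add_div _ _ _
        rw [hadd]; linarith
      have hr1 : Φ' z1 ^ 2 / Φ z1 ≤
          (Real.sqrt (2*Real.pi))⁻¹ * Real.exp (3/2 : ℝ) * Real.exp (-z1^2/4) :=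
        ratio2 hz1.le
      have hr2 : Φ' z2 ^ 2 / Φ (-z2) ≤
          (Real.sqrt (2*Real.pi))⁻¹ * Real.exp (3/2 : ℝ) * Real.exp (-z2^2/4) := by
        have := ratio2 (by linarith : -z2 ≤ 0)
        rw [Φ'_even, neg_sq] at this
        exact this
      have hfinal : (Φ' z1 ^ 2 / Φ z1 + Φ' z2 ^ 2 / Φ (-z2)) / (δ/2 * Φ' (δ/2)) ≤
          A2 * (Real.exp (-z1^2/4) + Real.exp (-z2^2/4)) := by
        have := div_le_div₀ (by positivity) (add_le_add hr1 hr2) hcδ le_rfl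
        refine this.trans (le_of_eq ?_)
        rw [hA2def]; ring
      have := (hfrac.trans hsplit).trans hfinal
      nlinarith [mul_nonneg hA1 he1.le, mul_nonneg hA1 he2.le]

lemma Φ_strict {a b : ℝ} (h : a < b) : 0 < Φ b - Φ a := by
  have hgap : (b - a) * Φ' (|a| + |b| + 1) ≤ Φ b - Φ a := by
    refine Φ_gap h.le (Φ'_pos _).le fun u hu => ?_
    refine Φ'_anti ?_
    rw [abs_of_nonneg (by positivity : (0:ℝ) ≤ |a| + |b| + 1)]
    have := neg_abs_le a; have := le_abs_self b
    exact abs_le.2 ⟨by linarith [hu.1, abs_nonneg b], by linarith [hu.2, abs_nonneg a]⟩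
  have : 0 < (b - a) * Φ' (|a| + |b| + 1) := by
    have := Φ'_pos (|a| + |b| + 1); have : (0:ℝ) < b - a := by linarith
    positivity
  linarith

lemma integrable_gauss4 : Integrable (fun z : ℝ => Real.exp (-z^2/4)) := by
  have : Integrable (fun z : ℝ => Real.exp (-(1/4 : ℝ) * z ^ 2)) :=
    integrable_exp_neg_mul_sq (by norm_num)
  refine this.congr (Eventually.of_forall fun z => ?_)
  ring_nf

lemma gauss_shift_integrable {r : ℝ} (hr : 0 < r) (c : ℝ) :
    Integrable (fun x : ℝ => Real.exp (-((c - x)/r)^2/4)) := by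
  have h1 : Integrable (fun x : ℝ => Real.exp (-(x/r)^2/4)) :=
    integrable_gauss4.comp_div hr.ne'
  exact h1.comp_sub_left c

lemma gauss_shift_integral {r : ℝ} (hr : 0 < r) (c : ℝ) :
    ∫ x : ℝ, Real.exp (-((c - x)/r)^2/4) = r * ∫ z : ℝ, Real.exp (-z^2/4) := by
  have h1 : ∫ x : ℝ, Real.exp (-((c - x)/r)^2/4) =
      ∫ x : ℝ, Real.exp (-(x/r)^2/4) :=
    integral_sub_left_eq_self (fun y : ℝ => Real.exp (-(y/r)^2/4)) volume c
  rw [h1, MeasureTheory.Measure.integral_comp_div (fun z : ℝ => Real.exp (-z^2/4)) r,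
    abs_of_pos hr, smul_eq_mul]

noncomputable def Jaux (p c1 c2 : ℝ) (q : ℝ) : ℝ :=
  ∫ x : ℝ,
    ((Φ' ((c1 - x)/Real.sqrt (p - q)) - Φ' ((c2 - x)/Real.sqrt (p - q)))^2 /
      (Real.sqrt (p - q) * (Φ ((c2 - x)/Real.sqrt (p - q)) - Φ ((c1 - x)/Real.sqrt (p - q))) *
        (Φ (-((c2 - x)/Real.sqrt (p - q))) + Φ ((c1 - x)/Real.sqrt (p - q))))) *
      Real.exp (-x^2/2)

lemma measurable_Φ' : Measurable Φ' := by
  unfold Φ'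
  exact (Real.continuous_exp.comp (by continuity)).measurable.const_mul _

lemma measurable_Φ : Measurable Φ :=
  Monotone.measurable fun _ _ h => Φ_mono h

lemma measurable_Jaux (p c1 c2 : ℝ) : Measurable (Jaux p c1 c2) := by
  have hz : ∀ c : ℝ, Measurable (fun v : ℝ × ℝ => (c - v.2) / Real.sqrt (p - v.1)) := by
    intro c
    exact (measurable_const.sub measurable_snd).div
      ((measurable_const.sub measurable_fst).sqrt)
  have hF : Measurable (fun v : ℝ × ℝ =>
      ((Φ' ((c1 - v.2)/Real.sqrt (p - v.1)) - Φ' ((c2 - v.2)/Real.sqrt (p - v.1)))^2 /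
        (Real.sqrt (p - v.1) *
          (Φ ((c2 - v.2)/Real.sqrt (p - v.1)) - Φ ((c1 - v.2)/Real.sqrt (p - v.1))) *
          (Φ (-((c2 - v.2)/Real.sqrt (p - v.1))) + Φ ((c1 - v.2)/Real.sqrt (p - v.1))))) *
        Real.exp (-v.2^2/2)) := by
    have h1 := measurable_Φ'.comp (hz c1)
    have h2 := measurable_Φ'.comp (hz c2)
    have h3 := measurable_Φ.comp (hz c1)
    have h4 := measurable_Φ.comp (hz c2)
    have h5 := measurable_Φ.comp (hz c2).neg
    have h6 : Measurable (fun v : ℝ × ℝ => Real.sqrt (p - v.1)) :=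
      (measurable_const.sub measurable_fst).sqrt
    have h7 : Measurable (fun v : ℝ × ℝ => Real.exp (-v.2^2/2)) :=
      (((measurable_snd.pow_const 2).neg).div_const 2).exp
    exact ((((h1.sub h2).pow_const 2).div ((h6.mul (h4.sub h3)).mul (h5.add h3))).mul h7)
  exact (hF.stronglyMeasurable.integral_prod_right').measurable


/-- `I(x,t)` of the paper: with `T(t) = ∫_0^t σ²`, `ρ = T(1)`, `τ = T(t)`,
`r = √(ρ - τ)`, `z1 = (c1 - x)/r`, `z2 = (c2 - x)/r`. -/
noncomputable def Ifun (σ : ℝ → ℝ) (c1 c2 t x : ℝ) : ℝ :=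
  let r := Real.sqrt ((∫ u in (0:ℝ)..1, (σ u) ^ 2) - ∫ u in (0:ℝ)..t, (σ u) ^ 2)
  let z1 := (c1 - x) / r
  let z2 := (c2 - x) / r
  (Φ' z1 - Φ' z2) ^ 2 / (r * (Φ z2 - Φ z1) * (Φ (-z2) + Φ z1))

/-- `G(t) = σ²(t)/(2π √(ρ-τ) √(2πτ)) · ∫_ℝ I(x,t) e^{-x²/2} dx`, i.e. `E[α²(t)]`. -/
noncomputable def Gfun (σ : ℝ → ℝ) (c1 c2 t : ℝ) : ℝ :=
  (σ t) ^ 2 /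
      (2 * Real.pi *
        Real.sqrt ((∫ u in (0:ℝ)..1, (σ u) ^ 2) - ∫ u in (0:ℝ)..t, (σ u) ^ 2) *
        Real.sqrt (2 * Real.pi * ∫ u in (0:ℝ)..t, (σ u) ^ 2)) *
    ∫ x : ℝ, Ifun σ c1 c2 t x * Real.exp (-x ^ 2 / 2)

/-- `∫_0^1 G(t) dt < ∞`, the analytic content of Conjecture 4.9 of
Pikovsky and Karatzas. -/
theorem G_integrable (σ : ℝ → ℝ) (hσ : Measurable σ) (s1 s2 : ℝ) (hs1 : 0 < s1)
    (hσbd : ∀ u ∈ Set.Icc (0:ℝ) 1, s1 ≤ σ u ∧ σ u ≤ s2)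
    (c1 c2 : ℝ) (hc : c1 < c2) :
    IntegrableOn (fun t : ℝ => Gfun σ c1 c2 t) (Set.Ioo 0 1) volume := by
  have h0mem : (0:ℝ) ∈ Set.Icc (0:ℝ) 1 := ⟨le_rfl, zero_le_one⟩
  have hs12 : s1 ≤ s2 := le_trans (hσbd 0 h0mem).1 (hσbd 0 h0mem).2
  have hs2 : 0 < s2 := lt_of_lt_of_le hs1 hs12
  set δ : ℝ := (c2 - c1)/s2 with hδdef
  have hδ : 0 < δ := div_pos (by linarith) hs2
  set Cg : ℝ := ∫ z : ℝ, Real.exp (-z^2/4) with hCgdef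
  have hCg0 : 0 ≤ Cg := integral_nonneg fun z => (Real.exp_pos _).le
  have hA0 : 0 ≤ Abound δ := Abound_nonneg hδ
  set p : ℝ := ∫ u in (0:ℝ)..1, (σ u) ^ 2 with hpdef
  -- integrability of σ² on [0,1]
  have hsq_meas : Measurable (fun u => (σ u) ^ 2) := hσ.pow_const 2
  have hIcc : IntegrableOn (fun u => (σ u) ^ 2) (Set.Icc (0:ℝ) 1) volume := by
    refine Integrable.mono' (integrable_const (s2^2)) hsq_meas.aestronglyMeasurable ?_
    refine (ae_restrict_iff' measurableSet_Icc).2 (Eventually.of_forall fun u hu => ?_)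
    have h1 := (hσbd u hu).1; have h2 := (hσbd u hu).2
    rw [Real.norm_eq_abs, abs_of_nonneg (sq_nonneg (σ u))]
    nlinarith
  have hIIab : ∀ a b : ℝ, (0:ℝ) ≤ a → a ≤ b → b ≤ 1 →
      IntervalIntegrable (fun u => (σ u) ^ 2) volume a b := by
    intro a b h0 hab hb1
    refine IntegrableOn.intervalIntegrable ?_
    rw [Set.uIcc_of_le hab]
    exact hIcc.mono_set (Set.Icc_subset_Icc h0 hb1)
  set K : ℝ := s2^2 * (2*Abound δ*Cg) / (2*Real.pi*Real.sqrt (2*Real.pi)*s1^2) with hKdef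
  have hK0 : 0 ≤ K := by
    rw [hKdef]
    have := Real.sqrt_nonneg (2*Real.pi)
    positivity
  -- measurability
  have hτcont : ContinuousOn (fun x : ℝ => ∫ u in Set.Ioc 0 x, (σ u) ^ 2) (Set.Icc (0:ℝ) 1) :=
    intervalIntegral.continuousOn_primitive hIcc
  have hτae : AEMeasurable (fun t : ℝ => ∫ u in (0:ℝ)..t, (σ u) ^ 2)
      (volume.restrict (Set.Ioo (0:ℝ) 1)) := by
    have h1 := ContinuousOn.aemeasurable (μ := volume) (hτcont.mono Set.Ioo_subset_Icc_self) measurableSet_Ioo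
    refine h1.congr ?_
    filter_upwards [ae_restrict_mem measurableSet_Ioo] with t ht
    exact (intervalIntegral.integral_of_le ht.1.le).symm
  have hGmeas : AEStronglyMeasurable (fun t : ℝ => Gfun σ c1 c2 t)
      (volume.restrict (Set.Ioo (0:ℝ) 1)) := by
    have houter : Measurable (fun v : ℝ × ℝ =>
        v.2 ^ 2 / (2 * Real.pi * Real.sqrt (p - v.1) * Real.sqrt (2 * Real.pi * v.1)) *
          Jaux p c1 c2 v.1) := by
      refine Measurable.mul ?_ ((measurable_Jaux p c1 c2).comp measurable_fst)
      refine Measurable.div (measurable_snd.pow_const 2) ?_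
      exact ((measurable_const.mul (measurable_const.sub measurable_fst).sqrt).mul
        ((measurable_const.mul measurable_fst).sqrt))
    have hmap : AEMeasurable (fun t : ℝ => ((∫ u in (0:ℝ)..t, (σ u) ^ 2), σ t))
        (volume.restrict (Set.Ioo (0:ℝ) 1)) := hτae.prodMk hσ.aemeasurable
    have := (houter.comp_aemeasurable hmap).aestronglyMeasurable
    exact this.congr (Eventually.of_forall fun t => rfl)
  -- integrability of the dominating function
  have hbase : IntegrableOn (fun t : ℝ => (Real.sqrt t)⁻¹ * (Real.sqrt (1-t))⁻¹)
      (Set.Ioo (0:ℝ) 1) volume := by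
    have hII1 : IntervalIntegrable (fun t : ℝ => t ^ (-(1/2) : ℝ)) volume 0 1 :=
      intervalIntegral.intervalIntegrable_rpow' (by norm_num)
    have hkey : ∀ x : ℝ, 0 ≤ x → x ^ (-(1/2) : ℝ) = (Real.sqrt x)⁻¹ := by
      intro x hx
      rw [Real.rpow_neg hx, Real.sqrt_eq_rpow]
    have h1 : IntegrableOn (fun t : ℝ => (Real.sqrt t)⁻¹) (Set.Ioo (0:ℝ) 1) volume := by
      have h := ((intervalIntegrable_iff_integrableOn_Ioc_of_le zero_le_one).1 hII1).mono_set
        Set.Ioo_subset_Ioc_self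
      exact h.congr_fun (fun x hx => hkey x hx.1.le) measurableSet_Ioo
    have h2 : IntegrableOn (fun t : ℝ => (Real.sqrt (1-t))⁻¹) (Set.Ioo (0:ℝ) 1) volume := by
      have hII2 := (hII1.comp_sub_left 1).symm
      rw [show (1:ℝ)-1 = 0 by norm_num, show (1:ℝ)-0 = 1 by norm_num] at hII2
      have h := ((intervalIntegrable_iff_integrableOn_Ioc_of_le zero_le_one).1 hII2).mono_set
        Set.Ioo_subset_Ioc_self
      exact h.congr_fun (fun x hx => hkey (1-x) (by linarith [hx.2])) measurableSet_Ioo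
    have hmeas : Measurable (fun t : ℝ => (Real.sqrt t)⁻¹ * (Real.sqrt (1-t))⁻¹) :=
      (measurable_id.sqrt.inv).mul ((measurable_const.sub measurable_id).sqrt.inv)
    refine Integrable.mono' (g := fun t => 2*((Real.sqrt t)⁻¹ + (Real.sqrt (1-t))⁻¹))
      (((h1.add h2).const_mul 2)) hmeas.aestronglyMeasurable ?_
    refine (ae_restrict_iff' measurableSet_Ioo).2 (Eventually.of_forall fun x hx => ?_)
    have hsx : 0 < Real.sqrt x := Real.sqrt_pos.2 hx.1
    have hsy : 0 < Real.sqrt (1-x) := Real.sqrt_pos.2 (by linarith [hx.2])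
    rw [Real.norm_eq_abs, abs_of_nonneg (by positivity)]
    rcases le_or_gt x (1/2) with hhalf | hhalf
    · have h1x : (1/2 : ℝ) ≤ 1 - x := by linarith
      have : (1/2 : ℝ) ≤ Real.sqrt (1-x) := by
        nlinarith [Real.sq_sqrt (by linarith [hx.2] : (0:ℝ) ≤ 1 - x), Real.sqrt_nonneg (1-x)]
      have h2' : (Real.sqrt (1-x))⁻¹ ≤ 2 := by
        rw [inv_le_comm₀ (by linarith) (by norm_num)]
        linarith
      have := mul_le_mul_of_nonneg_left h2' (inv_nonneg.2 hsx.le)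
      have h3 : 0 ≤ (Real.sqrt (1-x))⁻¹ := inv_nonneg.2 hsy.le
      nlinarith [inv_nonneg.2 hsx.le]
    · have h1x : (1/2 : ℝ) ≤ x := by linarith
      have : (1/2 : ℝ) ≤ Real.sqrt x := by
        nlinarith [Real.sq_sqrt hx.1.le, Real.sqrt_nonneg x]
      have h2' : (Real.sqrt x)⁻¹ ≤ 2 := by
        rw [inv_le_comm₀ (by linarith) (by norm_num)]
        linarith
      have := mul_le_mul_of_nonneg_right h2' (inv_nonneg.2 hsy.le)
      nlinarith [inv_nonneg.2 hsy.le, inv_nonneg.2 hsx.le]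
  -- main domination
  refine Integrable.mono' (hbase.const_mul K) hGmeas ?_
  refine (ae_restrict_iff' measurableSet_Ioo).2 (Eventually.of_forall fun t ht => ?_)
  obtain ⟨ht0, ht1⟩ := ht
  set q : ℝ := ∫ u in (0:ℝ)..t, (σ u) ^ 2 with hqdef
  have hII0t := hIIab 0 t le_rfl ht0.le ht1.le
  have hIIt1 := hIIab t 1 ht0.le ht1.le le_rfl
  have hII01 := hIIab 0 1 le_rfl zero_le_one le_rfl
  have hsub : p - q = ∫ u in t..1, (σ u) ^ 2 := by
    rw [hpdef, hqdef]
    exact (intervalIntegral.integral_interval_sub_left hII01 hII0t)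
  have hbd' : ∀ u ∈ Set.Icc (0:ℝ) 1, s1^2 ≤ (σ u)^2 ∧ (σ u)^2 ≤ s2^2 := by
    intro u hu
    obtain ⟨h1, h2⟩ := hσbd u hu
    constructor
    · nlinarith
    · nlinarith
  have hlow : s1^2*(1-t) ≤ p - q := by
    rw [hsub]
    have hc : (∫ u in t..1, (s1^2 : ℝ)) ≤ ∫ u in t..1, (σ u)^2 := by
      refine intervalIntegral.integral_mono_on ht1.le intervalIntegrable_const hIIt1
        fun u hu => (hbd' u ⟨le_trans ht0.le hu.1, hu.2⟩).1
    rw [intervalIntegral.integral_const, smul_eq_mul] at hc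
    linarith
  have hupp : p - q ≤ s2^2 := by
    rw [hsub]
    have hc : (∫ u in t..1, (σ u)^2) ≤ ∫ u in t..1, (s2^2 : ℝ) := by
      refine intervalIntegral.integral_mono_on ht1.le hIIt1 intervalIntegrable_const
        fun u hu => (hbd' u ⟨le_trans ht0.le hu.1, hu.2⟩).2
    rw [intervalIntegral.integral_const, smul_eq_mul] at hc
    nlinarith
  have hqlow : s1^2*t ≤ q := by
    rw [hqdef]
    have hc : (∫ u in (0:ℝ)..t, (s1^2 : ℝ)) ≤ ∫ u in (0:ℝ)..t, (σ u)^2 := by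
      refine intervalIntegral.integral_mono_on ht0.le intervalIntegrable_const hII0t
        fun u hu => (hbd' u ⟨hu.1, le_trans hu.2 ht1.le⟩).1
    rw [intervalIntegral.integral_const, smul_eq_mul] at hc
    linarith
  set r : ℝ := Real.sqrt (p - q) with hrdef
  have hpq : 0 < p - q := lt_of_lt_of_le (mul_pos (by positivity) (by linarith)) hlow
  have hr : 0 < r := Real.sqrt_pos.2 hpq
  have hr_le : r ≤ s2 := by
    rw [hrdef]
    calc Real.sqrt (p - q) ≤ Real.sqrt (s2^2) := Real.sqrt_le_sqrt hupp
    _ = s2 := Real.sqrt_sq hs2.le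
  have hr_lb : s1 * Real.sqrt (1-t) ≤ r := by
    rw [hrdef]
    calc s1 * Real.sqrt (1-t) = Real.sqrt (s1^2*(1-t)) := by
          rw [Real.sqrt_mul (sq_nonneg s1), Real.sqrt_sq hs1.le]
    _ ≤ Real.sqrt (p - q) := Real.sqrt_le_sqrt hlow
  have hz2 : ∀ x : ℝ, (c1 - x)/r + δ ≤ (c2 - x)/r := by
    intro x
    have h1 : δ ≤ (c2 - c1)/r := by
      rw [hδdef]
      exact div_le_div_of_nonneg_left (by linarith) hr hr_le
    have h2 : (c1 - x)/r + (c2 - c1)/r = (c2 - x)/r := by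
      rw [← add_div]; ring_nf
    linarith
  have hIeq : ∀ x : ℝ, Ifun σ c1 c2 t x =
      (Φ' ((c1 - x)/r) - Φ' ((c2 - x)/r))^2 /
        (r * (Φ ((c2 - x)/r) - Φ ((c1 - x)/r)) * (Φ (-((c2 - x)/r)) + Φ ((c1 - x)/r))) := by
    intro x
    rw [hrdef, hpdef, hqdef]
    rfl
  have hptw : ∀ x : ℝ, ‖Ifun σ c1 c2 t x * Real.exp (-x^2/2)‖ ≤
      Abound δ / r * (Real.exp (-((c1 - x)/r)^2/4) + Real.exp (-((c2 - x)/r)^2/4)) := by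
    intro x
    have hgappos : 0 < Φ ((c2 - x)/r) - Φ ((c1 - x)/r) := Φ_strict (by linarith [hz2 x])
    have hthirdpos : 0 < Φ (-((c2 - x)/r)) + Φ ((c1 - x)/r) := by
      have := Φ_pos (-((c2 - x)/r)); have := Φ_pos ((c1 - x)/r); linarith
    have hcore := core hδ (hz2 x)
    have hInn : 0 ≤ Ifun σ c1 c2 t x := by
      rw [hIeq x]
      exact div_nonneg (sq_nonneg _)
        (mul_nonneg (mul_nonneg hr.le hgappos.le) hthirdpos.le)
    have hIle : Ifun σ c1 c2 t x ≤
        Abound δ / r * (Real.exp (-((c1 - x)/r)^2/4) + Real.exp (-((c2 - x)/r)^2/4)) := by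
      rw [hIeq x]
      have heq2 : (Φ' ((c1 - x)/r) - Φ' ((c2 - x)/r))^2 /
          (r * (Φ ((c2 - x)/r) - Φ ((c1 - x)/r)) * (Φ (-((c2 - x)/r)) + Φ ((c1 - x)/r))) =
          ((Φ' ((c1 - x)/r) - Φ' ((c2 - x)/r))^2 /
            ((Φ ((c2 - x)/r) - Φ ((c1 - x)/r)) * (Φ (-((c2 - x)/r)) + Φ ((c1 - x)/r)))) / r := by
        rw [div_div]; ring_nf
      rw [heq2]
      calc (Φ' ((c1 - x)/r) - Φ' ((c2 - x)/r))^2 /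
            ((Φ ((c2 - x)/r) - Φ ((c1 - x)/r)) * (Φ (-((c2 - x)/r)) + Φ ((c1 - x)/r))) / r ≤
          (Abound δ * (Real.exp (-((c1 - x)/r)^2/4) + Real.exp (-((c2 - x)/r)^2/4))) / r := by
            refine div_le_div₀ (by positivity) hcore hr le_rfl
      _ = Abound δ / r * (Real.exp (-((c1 - x)/r)^2/4) + Real.exp (-((c2 - x)/r)^2/4)) := by
            ring
    have hexple : Real.exp (-x^2/2) ≤ 1 := by
      rw [Real.exp_le_one_iff]
      nlinarith [sq_nonneg x]
    calc ‖Ifun σ c1 c2 t x * Real.exp (-x^2/2)‖ = Ifun σ c1 c2 t x * Real.exp (-x^2/2) := by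
          rw [Real.norm_eq_abs, abs_of_nonneg (mul_nonneg hInn (Real.exp_pos _).le)]
    _ ≤ Ifun σ c1 c2 t x * 1 := mul_le_mul_of_nonneg_left hexple hInn
    _ = Ifun σ c1 c2 t x := mul_one _
    _ ≤ _ := hIle
  have hmaj_int : Integrable (fun x : ℝ => Abound δ / r *
      (Real.exp (-((c1 - x)/r)^2/4) + Real.exp (-((c2 - x)/r)^2/4))) :=
    ((gauss_shift_integrable hr c1).add (gauss_shift_integrable hr c2)).const_mul _
  have hJle : ‖∫ x : ℝ, Ifun σ c1 c2 t x * Real.exp (-x^2/2)‖ ≤ 2*Abound δ*Cg := by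
    have h := norm_integral_le_of_norm_le hmaj_int (Eventually.of_forall hptw)
    have hval : (∫ x : ℝ, Abound δ / r *
        (Real.exp (-((c1 - x)/r)^2/4) + Real.exp (-((c2 - x)/r)^2/4))) =
        Abound δ / r * (r * Cg + r * Cg) := by
      rw [MeasureTheory.integral_const_mul,
        integral_add (gauss_shift_integrable hr c1) (gauss_shift_integrable hr c2),
        gauss_shift_integral hr c1, gauss_shift_integral hr c2, hCgdef]
    rw [hval] at h
    have : Abound δ / r * (r * Cg + r * Cg) = 2*Abound δ*Cg := by
      field_simp
      ring
    linarith [h, this]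
  -- final assembly
  have hGeq : Gfun σ c1 c2 t =
      (σ t)^2 / (2*Real.pi*r*Real.sqrt (2*Real.pi*q)) *
        ∫ x : ℝ, Ifun σ c1 c2 t x * Real.exp (-x^2/2) := by
    rw [hrdef, hpdef, hqdef]
    rfl
  have hq0 : 0 < q := lt_of_lt_of_le (mul_pos (by positivity) ht0) hqlow
  have hst : 0 < Real.sqrt t := Real.sqrt_pos.2 ht0
  have hs1t : 0 < Real.sqrt (1-t) := Real.sqrt_pos.2 (by linarith)
  have hqrt : Real.sqrt (2*Real.pi) * (s1*Real.sqrt t) ≤ Real.sqrt (2*Real.pi*q) := by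
    have h1 : 2*Real.pi*(s1^2*t) ≤ 2*Real.pi*q :=
      mul_le_mul_of_nonneg_left hqlow (by positivity)
    calc Real.sqrt (2*Real.pi) * (s1*Real.sqrt t) = Real.sqrt (2*Real.pi*(s1^2*t)) := by
          rw [Real.sqrt_mul (by positivity : (0:ℝ) ≤ 2*Real.pi),
            Real.sqrt_mul (sq_nonneg s1), Real.sqrt_sq hs1.le]
    _ ≤ Real.sqrt (2*Real.pi*q) := Real.sqrt_le_sqrt h1
  have hpref : (σ t)^2 / (2*Real.pi*r*Real.sqrt (2*Real.pi*q)) ≤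
      s2^2 / (2*Real.pi*(s1*Real.sqrt (1-t))*(Real.sqrt (2*Real.pi)*(s1*Real.sqrt t))) := by
    have hnum : (σ t)^2 ≤ s2^2 := (hbd' t ⟨ht0.le, ht1.le⟩).2
    have hdpos : 0 < 2*Real.pi*(s1*Real.sqrt (1-t))*(Real.sqrt (2*Real.pi)*(s1*Real.sqrt t)) := by
      have := sqrt_two_pi_pos
      positivity
    refine div_le_div₀ (sq_nonneg s2) hnum hdpos ?_
    refine mul_le_mul ?_ hqrt (by positivity) (by positivity)
    exact mul_le_mul_of_nonneg_left hr_lb (by positivity)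
  have hprefnn : 0 ≤ (σ t)^2 / (2*Real.pi*r*Real.sqrt (2*Real.pi*q)) := by
    have h1 : 0 ≤ Real.sqrt (2*Real.pi*q) := Real.sqrt_nonneg _
    positivity
  have hKeq : s2^2 / (2*Real.pi*(s1*Real.sqrt (1-t))*(Real.sqrt (2*Real.pi)*(s1*Real.sqrt t))) *
      (2*Abound δ*Cg) = K * ((Real.sqrt t)⁻¹ * (Real.sqrt (1-t))⁻¹) := by
    rw [hKdef]
    have h1 := sqrt_two_pi_pos
    have h2 := Real.pi_pos
    have ha : Real.sqrt (1-t) ≠ 0 := ne_of_gt hs1t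
    have hb : Real.sqrt t ≠ 0 := ne_of_gt hst
    have hpi : Real.pi ≠ 0 := ne_of_gt h2
    have hsq : Real.sqrt (2*Real.pi) ≠ 0 := ne_of_gt h1
    have hs1' : s1 ≠ 0 := ne_of_gt hs1
    field_simp
  rw [Real.norm_eq_abs, hGeq, abs_mul, abs_of_nonneg hprefnn]
  calc (σ t)^2 / (2*Real.pi*r*Real.sqrt (2*Real.pi*q)) *
        |∫ x : ℝ, Ifun σ c1 c2 t x * Real.exp (-x^2/2)| ≤
      s2^2 / (2*Real.pi*(s1*Real.sqrt (1-t))*(Real.sqrt (2*Real.pi)*(s1*Real.sqrt t))) *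
        (2*Abound δ*Cg) := by
        refine mul_le_mul hpref ?_ (abs_nonneg _) (by positivity)
        rw [← Real.norm_eq_abs]
        exact hJle
  _ = K * ((Real.sqrt t)⁻¹ * (Real.sqrt (1-t))⁻¹) := hKeq
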